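/- arXiv:2404.15291 — 3 statements merged into one kernel-verified Lean document; each statement's English description precedes it below -/
import Mathlib

section
/- Let a, b, c ∈ ℝ with b > 0 and let τ > 0. With β = (ab+c)·(2b·ln b − τ·(ab−c))/(8b²π²), γ = −(ab+c)/(2bπ), and s_k = (ln b + 2kπi)/τ + β/k² + i·γ/k, there exist constants C > 0 and K ∈ ℕ such that for all integers k ≥ K one has b·s_k + c ≠ 0 and |e^{−s_k·τ} − (s_k − a)/(b·s_k + c)| ≤ C/k³; that is, the improved approximate poles s_k satisfy the characteristic-root relation e^{−s·τ} = (s − a)/(b·s + c) up to an error of order k^{−3}. -/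
open Complex Filter Topology

/-- The improved approximate pole
`s_k = (ln b + 2kπi)/τ + β/k² + iγ/k` with
`β = (ab+c)(2b ln b − τ(ab−c))/(8b²π²)` and `γ = −(ab+c)/(2bπ)`. -/
noncomputable def skImproved (a b c τ : ℝ) (k : ℕ) : ℂ :=
  ((Real.log b : ℂ) + 2 * (k : ℂ) * (Real.pi : ℂ) * Complex.I) / (τ : ℂ)
    + (((a * b + c) * (2 * b * Real.log b - τ * (a * b - c)) / (8 * b ^ 2 * Real.pi ^ 2) : ℝ) : ℂ) / (k : ℂ) ^ 2
    + Complex.I * ((-(a * b + c) / (2 * b * Real.pi) : ℝ) : ℂ) / (k : ℂ)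

/-- complex coefficient β -/
noncomputable def bND (a b c τ : ℝ) : ℂ :=
  (((a * b + c) * (2 * b * Real.log b - τ * (a * b - c)) / (8 * b ^ 2 * Real.pi ^ 2) : ℝ) : ℂ)

/-- complex coefficient i·γ -/
noncomputable def gND (a b c : ℝ) : ℂ :=
  Complex.I * ((-(a * b + c) / (2 * b * Real.pi) : ℝ) : ℂ)

noncomputable def AND (b τ : ℝ) : ℂ := (Real.log b : ℂ) / (τ : ℂ)

noncomputable def BND (τ : ℝ) : ℂ := 2 * (Real.pi : ℂ) * Complex.I / (τ : ℂ)

/-- u(x) = x · s_{1/x} -/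
noncomputable def uND (a b c τ : ℝ) (x : ℂ) : ℂ :=
  BND τ + AND b τ * x + gND a b c * x ^ 2 + bND a b c τ * x ^ 3

/-- q(x) : exponent correction -/
noncomputable def qND (a b c τ : ℝ) (x : ℂ) : ℂ :=
  (-(τ : ℂ) * gND a b c) * x - (τ : ℂ) * bND a b c τ * x ^ 2

/-- the (denominator-free) cofactor W -/
noncomputable def WND (a b c τ : ℝ) (x : ℂ) : ℂ :=
  2 * (b : ℂ) * (-(τ : ℂ) * gND a b c) * (gND a b c + bND a b c τ * x)
    - 2 * (τ : ℂ) * bND a b c τ *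
        (AND b τ * (b : ℂ) + (c : ℂ) + (b : ℂ) * gND a b c * x + (b : ℂ) * bND a b c τ * x ^ 2)
    + (-(τ : ℂ) * gND a b c) ^ 2 *
        (AND b τ * (b : ℂ) + (c : ℂ) + (b : ℂ) * gND a b c * x + (b : ℂ) * bND a b c τ * x ^ 2)
    + (-2 * (-(τ : ℂ) * gND a b c) * (τ : ℂ) * bND a b c τ + (τ : ℂ) ^ 2 * bND a b c τ ^ 2 * x) *
        ((b : ℂ) * uND a b c τ x + (c : ℂ) * x)

/-- purely polynomial generalized key identity -/
theorem genKey (a b c τ A B β γq x : ℂ)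
    (h1 : a * b + c + (-τ * γq) * B * b = 0)
    (h2 : 2 * (-τ * γq) * (A * b + c) - 2 * τ * β * B * b + (-τ * γq) ^ 2 * B * b = 0) :
    (2 + 2 * ((-τ * γq) * x - τ * β * x ^ 2) + ((-τ * γq) * x - τ * β * x ^ 2) ^ 2) *
        (b * (B + A * x + γq * x ^ 2 + β * x ^ 3) + c * x)
      - 2 * b * ((B + A * x + γq * x ^ 2 + β * x ^ 3) - a * x)
    = x ^ 3 *
      (2 * b * (-τ * γq) * (γq + β * x)
        - 2 * τ * β * (A * b + c + b * γq * x + b * β * x ^ 2)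
        + (-τ * γq) ^ 2 * (A * b + c + b * γq * x + b * β * x ^ 2)
        + (-2 * (-τ * γq) * τ * β + τ ^ 2 * β ^ 2 * x) *
            (b * (B + A * x + γq * x ^ 2 + β * x ^ 3) + c * x)) := by
  linear_combination 2 * x * h1 + x ^ 2 * h2

theorem h1ND (a b c τ : ℝ) (hb : b ≠ 0) (hτ : τ ≠ 0) :
    (a : ℂ) * b + c + (-(τ : ℂ) * gND a b c) * BND τ * (b : ℂ) = 0 := by
  have hb' : (b : ℂ) ≠ 0 := by exact_mod_cast hb
  have hτ' : (τ : ℂ) ≠ 0 := by exact_mod_cast hτ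
  have hπ' : ((Real.pi : ℝ) : ℂ) ≠ 0 := by exact_mod_cast Real.pi_ne_zero
  have hI := Complex.I_sq
  have hττ : (τ : ℂ) * ((τ : ℂ))⁻¹ = 1 := mul_inv_cancel₀ hτ'
  have hγ : 2 * (b : ℂ) * (Real.pi : ℂ) * (-((a : ℂ) * b + c) / (2 * (b : ℂ) * (Real.pi : ℂ)))
      = -((a : ℂ) * b + c) := by field_simp
  simp only [gND, BND]
  push_cast
  linear_combination
    (-((τ : ℂ) * ((τ : ℂ))⁻¹) * (2 * (b : ℂ) * (Real.pi : ℂ) *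
        (-((a : ℂ) * b + c) / (2 * (b : ℂ) * (Real.pi : ℂ))))) * hI
    + (2 * (b : ℂ) * (Real.pi : ℂ) *
        (-((a : ℂ) * b + c) / (2 * (b : ℂ) * (Real.pi : ℂ)))) * hττ
    + hγ

theorem h2ND (a b c τ : ℝ) (hb : b ≠ 0) (hτ : τ ≠ 0) :
    2 * (-(τ : ℂ) * gND a b c) * (AND b τ * (b : ℂ) + (c : ℂ))
      - 2 * (τ : ℂ) * bND a b c τ * BND τ * (b : ℂ)
      + (-(τ : ℂ) * gND a b c) ^ 2 * BND τ * (b : ℂ) = 0 := by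
  have hb' : (b : ℂ) ≠ 0 := by exact_mod_cast hb
  have hτ' : (τ : ℂ) ≠ 0 := by exact_mod_cast hτ
  have hπ' : ((Real.pi : ℝ) : ℂ) ≠ 0 := by exact_mod_cast Real.pi_ne_zero
  have hI := Complex.I_sq
  have hττ : (τ : ℂ) * ((τ : ℂ))⁻¹ = 1 := mul_inv_cancel₀ hτ'
  set L : ℂ := (Real.log b : ℂ) with hL
  set γ : ℂ := -((a : ℂ) * b + c) / (2 * (b : ℂ) * (Real.pi : ℂ)) with hγd
  set β : ℂ := ((a : ℂ) * b + c) * (2 * (b : ℂ) * L - (τ : ℂ) * ((a : ℂ) * b - c))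
      / (8 * (b : ℂ) ^ 2 * (Real.pi : ℂ) ^ 2) with hβd
  have hR : (-(a * b + c) / (2 * b * Real.pi)) * (Real.log b * b + τ * c)
      + 2 * Real.pi * ((a * b + c) * (2 * b * Real.log b - τ * (a * b - c))
          / (8 * b ^ 2 * Real.pi ^ 2)) * b
      + Real.pi * τ * (-(a * b + c) / (2 * b * Real.pi)) ^ 2 * b = 0 := by
    have hπ : Real.pi ≠ 0 := Real.pi_ne_zero
    field_simp
    ring
  have hRcast := congrArg (fun r : ℝ => (r : ℂ)) hR
  push_cast at hRcast
  have hRC : γ * (L * b + (τ : ℂ) * c) + 2 * (Real.pi : ℂ) * β * b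
      + (Real.pi : ℂ) * (τ : ℂ) * γ ^ 2 * b = 0 := by
    rw [hγd, hβd, hL]
    linear_combination hRcast
  simp only [gND, BND, AND, bND]
  push_cast
  rw [← hL, ← hγd, ← hβd]
  linear_combination
    (2 * (Real.pi : ℂ) * γ ^ 2 * Complex.I * (τ : ℂ) * (b : ℂ)) * hI
    + (-2 * Complex.I * γ * L * (b : ℂ) - 4 * (Real.pi : ℂ) * Complex.I * β * (b : ℂ)
        + 2 * (Real.pi : ℂ) * γ ^ 2 * Complex.I * (τ : ℂ) * (b : ℂ) * Complex.I ^ 2) * hττ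
    + (-2 * Complex.I) * hRC

theorem keyND (a b c τ : ℝ) (hb : b ≠ 0) (hτ : τ ≠ 0) (x : ℂ) :
    ((b : ℂ))⁻¹ * (1 + qND a b c τ x + qND a b c τ x ^ 2 / 2) *
        ((b : ℂ) * uND a b c τ x + (c : ℂ) * x) - (uND a b c τ x - (a : ℂ) * x)
      = x ^ 3 * WND a b c τ x / (2 * (b : ℂ)) := by
  have hb' : (b : ℂ) ≠ 0 := by exact_mod_cast hb
  have hg := genKey (a : ℂ) (b : ℂ) (c : ℂ) (τ : ℂ) (AND b τ) (BND τ) (bND a b c τ)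
    (gND a b c) x (h1ND a b c τ hb hτ) (h2ND a b c τ hb hτ)
  have hbb : (b : ℂ) * ((b : ℂ))⁻¹ = 1 := mul_inv_cancel₀ hb'
  rw [eq_div_iff (by simpa using hb' : (2 : ℂ) * (b : ℂ) ≠ 0)]
  simp only [uND, qND, WND] at *
  linear_combination hg + 2 * (1 + ((-(τ:ℂ) * gND a b c) * x - (τ:ℂ) * bND a b c τ * x ^ 2)
      + ((-(τ:ℂ) * gND a b c) * x - (τ:ℂ) * bND a b c τ * x ^ 2) ^ 2 / 2) *
      ((b:ℂ) * (BND τ + AND b τ * x + gND a b c * x ^ 2 + bND a b c τ * x ^ 3) + (c:ℂ) * x) * hbb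

theorem xs_eq (a b c τ : ℝ) (hτ : τ ≠ 0) (k : ℕ) (hk : 1 ≤ k) :
    ((k : ℂ))⁻¹ * skImproved a b c τ k = uND a b c τ ((k : ℂ))⁻¹ := by
  have hk' : (k : ℂ) ≠ 0 := Nat.cast_ne_zero.2 (by omega)
  have hkk : ((k : ℂ))⁻¹ * (k : ℂ) = 1 := inv_mul_cancel₀ hk'
  simp only [skImproved, uND, AND, BND, gND, bND]
  linear_combination (2 * (Real.pi : ℂ) * Complex.I / (τ : ℂ)) * hkk

theorem exp_eq (a b c τ : ℝ) (hb : 0 < b) (hτ : τ ≠ 0) (k : ℕ) (hk : 1 ≤ k) :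
    Complex.exp (-(skImproved a b c τ k) * (τ : ℂ))
      = ((b : ℂ))⁻¹ * Complex.exp (qND a b c τ ((k : ℂ))⁻¹) := by
  have hk' : (k : ℂ) ≠ 0 := by exact_mod_cast Nat.cast_ne_zero.2 (by omega)
  have hτ' : (τ : ℂ) ≠ 0 := by exact_mod_cast hτ
  have h : -(skImproved a b c τ k) * (τ : ℂ)
      = -(Real.log b : ℂ) + ((-(k : ℤ) : ℤ) : ℂ) * (2 * (Real.pi : ℂ) * Complex.I)
        + qND a b c τ ((k : ℂ))⁻¹ := by
    have hττ : (τ : ℂ) * ((τ : ℂ))⁻¹ = 1 := mul_inv_cancel₀ hτ'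
    simp only [skImproved, qND, gND, bND]
    push_cast
    linear_combination (-(Real.log b : ℂ) - 2 * (k : ℂ) * (Real.pi : ℂ) * Complex.I) * hττ
  rw [h, Complex.exp_add, Complex.exp_add, Complex.exp_int_mul_two_pi_mul_I, mul_one,
    Complex.exp_neg, ← Complex.ofReal_exp, Real.exp_log hb]

set_option maxHeartbeats 1000000 in
/-- the improved approximate poles `s_k` satisfy the characteristic-root
relation `e^{−sτ} = (s − a)/(b·s + c)` up to an error of order `k⁻³`. -/
theorem stmt_1 (a b c τ : ℝ) (hb : 0 < b) (hτ : 0 < τ) :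
    ∃ C : ℝ, 0 < C ∧ ∃ K : ℕ, ∀ k : ℕ, K ≤ k →
      (b : ℂ) * skImproved a b c τ k + (c : ℂ) ≠ 0 ∧
      ‖Complex.exp (-(skImproved a b c τ k) * (τ : ℂ))
          - (skImproved a b c τ k - (a : ℂ)) / ((b : ℂ) * skImproved a b c τ k + (c : ℂ))‖
        ≤ C / (k : ℝ) ^ 3 := by
  have hb' : (b : ℂ) ≠ 0 := by exact_mod_cast hb.ne'
  have hτ' : (τ : ℂ) ≠ 0 := by exact_mod_cast hτ.ne'
  -- auxiliary continuous functions
  set V : ℂ → ℂ := fun y => WND a b c τ y / (2 * (b : ℂ)) with hV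
  set D : ℂ → ℂ := fun y => (b : ℂ) * uND a b c τ y + (c : ℂ) * y with hD
  set ql : ℂ → ℂ := fun y => -(τ : ℂ) * gND a b c - (τ : ℂ) * bND a b c τ * y with hql
  have hqfact : ∀ y : ℂ, qND a b c τ y = y * ql y := fun y => by
    simp only [qND, hql]; ring
  have hVc : Continuous V := by
    simp only [hV, WND, uND]; fun_prop
  have hDc : Continuous D := by
    simp only [hD, uND]; fun_prop
  have hqlc : Continuous ql := by
    simp only [hql]; fun_prop
  have hqc : Continuous (qND a b c τ) := by
    unfold qND; fun_prop
  -- x k → 0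
  have hx : Tendsto (fun k : ℕ => ((k : ℂ))⁻¹) atTop (𝓝 0) := by
    rw [tendsto_zero_iff_norm_tendsto_zero]
    have : (fun k : ℕ => ‖((k : ℂ))⁻¹‖) = fun k : ℕ => ((k : ℝ))⁻¹ := by
      funext k; simp
    rw [this]
    exact tendsto_inv_atTop_zero.comp tendsto_natCast_atTop_atTop
  have hD0ne : D 0 ≠ 0 := by
    have hD0 : D 0 = (b : ℂ) * BND τ := by simp [hD, uND]
    rw [hD0, BND]
    apply mul_ne_zero hb'
    apply div_ne_zero _ hτ'
    refine mul_ne_zero (mul_ne_zero two_ne_zero ?_) Complex.I_ne_zero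
    exact_mod_cast Real.pi_ne_zero
  have hnD : 0 < ‖D 0‖ := norm_pos_iff.2 hD0ne
  set nD : ℝ := ‖D 0‖ with hnDdef
  have tV : Tendsto (fun k : ℕ => V ((k : ℂ))⁻¹) atTop (𝓝 (V 0)) :=
    (hVc.tendsto 0).comp hx
  have tD : Tendsto (fun k : ℕ => D ((k : ℂ))⁻¹) atTop (𝓝 (D 0)) :=
    (hDc.tendsto 0).comp hx
  have tql : Tendsto (fun k : ℕ => ql ((k : ℂ))⁻¹) atTop (𝓝 (ql 0)) :=
    (hqlc.tendsto 0).comp hx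
  have hq0 : qND a b c τ 0 = 0 := by simp [qND]
  have tq : Tendsto (fun k : ℕ => qND a b c τ ((k : ℂ))⁻¹) atTop (𝓝 0) := by
    have := (hqc.tendsto 0).comp hx
    rwa [hq0] at this
  have E1 : ∀ᶠ k : ℕ in atTop, ‖V ((k : ℂ))⁻¹‖ < ‖V 0‖ + 1 :=
    tV.norm.eventually_lt_const (lt_add_one _)
  have E2 : ∀ᶠ k : ℕ in atTop, ‖ql ((k : ℂ))⁻¹‖ < ‖ql 0‖ + 1 :=
    tql.norm.eventually_lt_const (lt_add_one _)
  have E3 : ∀ᶠ k : ℕ in atTop, ‖D ((k : ℂ))⁻¹‖ < nD + 1 :=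
    tD.norm.eventually_lt_const (lt_add_one _)
  have E4 : ∀ᶠ k : ℕ in atTop, nD / 2 < ‖D ((k : ℂ))⁻¹‖ :=
    tD.norm.eventually_const_lt (by linarith)
  have E5 : ∀ᶠ k : ℕ in atTop, ‖qND a b c τ ((k : ℂ))⁻¹‖ < 1 := by
    have := tq.norm
    rw [norm_zero] at this
    exact this.eventually_lt_const one_pos
  have E6 : ∀ᶠ k : ℕ in atTop, 1 ≤ k := eventually_ge_atTop 1
  set M : ℝ := (‖V 0‖ + 1) + (b : ℝ)⁻¹ * (‖ql 0‖ + 1) ^ 3 * (nD + 1) with hM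
  have hMpos : 0 < M := by
    have h1 : (0:ℝ) < ‖V 0‖ + 1 := by positivity
    have h2 : (0:ℝ) ≤ (b : ℝ)⁻¹ * (‖ql 0‖ + 1) ^ 3 * (nD + 1) :=
      mul_nonneg (mul_nonneg (inv_nonneg.2 hb.le) (by positivity)) (by linarith)
    rw [hM]; linarith
  refine ⟨2 * M / nD, div_pos (by linarith) hnD, ?_⟩
  obtain ⟨K, hK⟩ := eventually_atTop.1 (E1.and (E2.and (E3.and (E4.and (E5.and E6)))))
  refine ⟨K, fun k hk => ?_⟩
  obtain ⟨e1, e2, e3, e4, e5, e6⟩ := hK k hk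
  set s : ℂ := skImproved a b c τ k with hs
  set X : ℂ := ((k : ℕ) : ℂ)⁻¹ with hX
  have hkcne : ((k : ℕ) : ℂ) ≠ 0 := Nat.cast_ne_zero.2 (by omega)
  have hXne : X ≠ 0 := inv_ne_zero hkcne
  have hkR : (0 : ℝ) < (k : ℝ) := by exact_mod_cast Nat.pos_of_ne_zero (by omega)
  have hXnorm : ‖X‖ = ((k : ℝ))⁻¹ := by simp [hX]
  have hxs : X * s = uND a b c τ X := xs_eq a b c τ hτ.ne' k e6
  have hDX : D X = X * ((b : ℂ) * s + (c : ℂ)) := by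
    simp only [hD]
    rw [← hxs]; ring
  have hDXne : D X ≠ 0 := by
    intro h
    rw [h, norm_zero] at e4
    linarith
  have hsden : (b : ℂ) * s + (c : ℂ) ≠ 0 := by
    intro h
    apply hDXne
    rw [hDX, h, mul_zero]
  refine ⟨hsden, ?_⟩
  set q : ℂ := qND a b c τ X with hq
  set R2 : ℂ := Complex.exp q - (1 + q + q ^ 2 / 2) with hR2def
  -- the error identity
  have herr : Complex.exp (-s * (τ : ℂ)) - (s - (a : ℂ)) / ((b : ℂ) * s + (c : ℂ))
      = (X ^ 3 * V X + ((b : ℂ))⁻¹ * R2 * D X) / D X := by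
    rw [exp_eq a b c τ hb hτ.ne' k e6]
    have hr : (s - (a : ℂ)) / ((b : ℂ) * s + (c : ℂ))
        = (uND a b c τ X - (a : ℂ) * X) / D X := by
      rw [hDX, show uND a b c τ X - (a : ℂ) * X = X * (s - (a : ℂ)) by rw [← hxs]; ring,
        mul_div_mul_left _ _ hXne]
    rw [hr, eq_div_iff hDXne, sub_mul, div_mul_cancel₀ _ hDXne]
    have hkey := keyND a b c τ hb.ne' hτ.ne' X
    simp only [hV, hD, hR2def, hq]
    linear_combination hkey
  -- bound for R2
  have hqle1 : ‖q‖ ≤ 1 := by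
    exact e5.le
  have hsum3 : ∑ m ∈ Finset.range 3, q ^ m / (m.factorial : ℂ) = 1 + q + q ^ 2 / 2 := by
    simp [Finset.sum_range_succ, Nat.factorial]
  have hR2bound : ‖R2‖ ≤ ‖q‖ ^ 3 := by
    have hex := Complex.exp_bound hqle1 (n := 3) (by norm_num)
    rw [hsum3] at hex
    norm_num [Nat.factorial] at hex
    have hq3 : (0 : ℝ) ≤ ‖q‖ ^ 3 := by positivity
    rw [hR2def]
    nlinarith [hex]
  have hqnorm : ‖q‖ ≤ ‖X‖ * (‖ql 0‖ + 1) := by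
    rw [hq, hqfact X, norm_mul]
    exact mul_le_mul_of_nonneg_left e2.le (norm_nonneg _)
  have hR2le : ‖R2‖ ≤ ‖X‖ ^ 3 * (‖ql 0‖ + 1) ^ 3 := by
    calc ‖R2‖ ≤ ‖q‖ ^ 3 := hR2bound
      _ ≤ (‖X‖ * (‖ql 0‖ + 1)) ^ 3 := by
          apply pow_le_pow_left₀ (norm_nonneg _) hqnorm
      _ = ‖X‖ ^ 3 * (‖ql 0‖ + 1) ^ 3 := by rw [mul_pow]
  -- numerator bound
  have hbnorm : ‖((b : ℂ))⁻¹‖ = (b : ℝ)⁻¹ := by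
    rw [norm_inv, Complex.norm_real, Real.norm_eq_abs, abs_of_pos hb]
  have hNUM : ‖X ^ 3 * V X + ((b : ℂ))⁻¹ * R2 * D X‖ ≤ ‖X‖ ^ 3 * M := by
    calc ‖X ^ 3 * V X + ((b : ℂ))⁻¹ * R2 * D X‖
        ≤ ‖X ^ 3 * V X‖ + ‖((b : ℂ))⁻¹ * R2 * D X‖ := norm_add_le _ _
      _ = ‖X‖ ^ 3 * ‖V X‖ + (b : ℝ)⁻¹ * ‖R2‖ * ‖D X‖ := by
          rw [norm_mul, norm_pow, norm_mul, norm_mul, hbnorm]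
      _ ≤ ‖X‖ ^ 3 * (‖V 0‖ + 1) + (b : ℝ)⁻¹ * (‖X‖ ^ 3 * (‖ql 0‖ + 1) ^ 3) * (nD + 1) := by
          gcongr
      _ = ‖X‖ ^ 3 * M := by rw [hM]; ring
  -- finish
  rw [herr, norm_div]
  calc ‖X ^ 3 * V X + ((b : ℂ))⁻¹ * R2 * D X‖ / ‖D X‖
      ≤ (‖X‖ ^ 3 * M) / (nD / 2) :=
        div_le_div₀ (mul_nonneg (pow_nonneg (norm_nonneg _) 3) hMpos.le) hNUM
          (by linarith) e4.le
    _ = 2 * M / nD / (k : ℝ) ^ 3 := by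
        rw [hXnorm]
        rw [inv_pow, div_div]
        rw [div_eq_div_iff (by positivity) (by positivity)]
        field_simp
end

section
/- Let a, b, c ∈ ℝ with b > 0 and let τ > 0. For an integer k ≥ 1 set ŝ_k = (ln b + 2kπi)/τ. Then there exist constants C > 0 and K ∈ ℕ such that for all integers k ≥ K, b·ŝ_k + c ≠ 0 and |(ŝ_k − a)/(b·ŝ_k + c) − (1/b + i·(ab+c)·τ/(2·b²·π·k) − τ²·(ab+c)·(b·ln(b)/τ + c)/(4·b³·π²·k²))| ≤ C/k³. -/
set_option maxHeartbeats 1000000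

/-- asymptotic expansion of `(ŝ_k − a)/(b·ŝ_k + c)` at the leading-order
pole approximations `ŝ_k = (ln b + 2kπi)/τ`:
`(ŝ_k − a)/(b ŝ_k + c) = 1/b + i(ab+c)τ/(2b²πk) − τ²(ab+c)(b·ln(b)/τ + c)/(4b³π²k²) + O(k⁻³)`. -/
theorem stmt_9 (a b c τ : ℝ) (hb : 0 < b) (hτ : 0 < τ) :
    ∃ C : ℝ, 0 < C ∧ ∃ K : ℕ, ∀ k : ℕ, K ≤ k →
      (let shat : ℂ := ((Real.log b : ℂ) + 2 * (k : ℂ) * (Real.pi : ℂ) * Complex.I) / (τ : ℂ)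
      (b : ℂ) * shat + (c : ℂ) ≠ 0 ∧
      ‖(shat - (a : ℂ)) / ((b : ℂ) * shat + (c : ℂ))
          - (1 / (b : ℂ)
              + Complex.I * ((a * b + c : ℝ) : ℂ) * (τ : ℂ) / (2 * (b : ℂ) ^ 2 * (Real.pi : ℂ) * (k : ℂ))
              - (τ : ℂ) ^ 2 * ((a * b + c : ℝ) : ℂ) * ((b : ℂ) * (Real.log b : ℂ) / (τ : ℂ) + (c : ℂ))
                  / (4 * (b : ℂ) ^ 3 * (Real.pi : ℂ) ^ 2 * (k : ℂ) ^ 2))‖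
        ≤ C / (k : ℝ) ^ 3) := by
  have hπ : (0:ℝ) < Real.pi := Real.pi_pos
  set L : ℝ := Real.log b with hL
  set α : ℝ := L + c * τ / b with hα
  refine ⟨|a * b + c| * τ * α ^ 2 / (8 * b ^ 2 * Real.pi ^ 3) + 1, by positivity, 1, ?_⟩
  intro k hk
  have hk0 : (0:ℝ) < (k : ℝ) := by exact_mod_cast hk
  have hkC : (k : ℂ) ≠ 0 := by exact_mod_cast hk0.ne'
  have hbC : (b : ℂ) ≠ 0 := by exact_mod_cast hb.ne'
  have hτC : (τ : ℂ) ≠ 0 := by exact_mod_cast hτ.ne'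
  have hπC : (Real.pi : ℂ) ≠ 0 := by exact_mod_cast hπ.ne'
  intro shat
  set w : ℂ := (α : ℂ) + 2 * (k : ℂ) * (Real.pi : ℂ) * Complex.I with hw
  have hwim : w.im = 2 * (k : ℝ) * Real.pi := by
    simp [hw]
  have hw0 : w ≠ 0 := by
    intro h
    have : w.im = 0 := by rw [h]; simp
    rw [hwim] at this
    nlinarith
  have hshat : shat = (w - ((c * τ / b : ℝ) : ℂ)) / (τ : ℂ) := by
    simp only [shat, hw, hα, hL]
    push_cast
    ring
  have hden : (b : ℂ) * shat + (c : ℂ) = (b : ℂ) * w / (τ : ℂ) := by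
    rw [hshat]
    push_cast
    field_simp
    ring
  have hden0 : (b : ℂ) * shat + (c : ℂ) ≠ 0 := by
    rw [hden]
    exact div_ne_zero (mul_ne_zero hbC hw0) hτC
  refine ⟨hden0, ?_⟩
  -- Step A: exact form of the quotient
  have hA : (shat - (a : ℂ)) / ((b : ℂ) * shat + (c : ℂ))
      = 1 / (b : ℂ) - ((a * b + c : ℝ) : ℂ) * (τ : ℂ) / ((b : ℂ) ^ 2 * w) := by
    rw [hden, hshat]
    push_cast
    field_simp
    ring
  -- cast bookkeeping for the third term of the approximation
  have hLα : ((b : ℂ) * ((L:ℝ) : ℂ) / (τ : ℂ) + (c : ℂ)) * (τ:ℂ) = (b:ℂ) * ((α:ℝ):ℂ) := by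
    rw [hα]
    push_cast
    field_simp
  clear_value shat w α L
  have hαC : ((α : ℝ) : ℂ) = ((L:ℝ):ℂ) + (c:ℂ) * (τ:ℂ) / (b:ℂ) := by
    rw [hα]; push_cast; ring
  -- the small exact identity needing I² = -1
  have hNum : 4 * (Real.pi : ℂ) ^ 2 * (k : ℂ) ^ 2
        + 2 * (Real.pi : ℂ) * (k : ℂ) * Complex.I * w - ((α : ℝ) : ℂ) * w
      = -((α : ℝ) : ℂ) ^ 2 := by
    rw [hw]
    linear_combination (4 * (Real.pi : ℂ) ^ 2 * (k : ℂ) ^ 2) * Complex.I_sq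
  have hD1 : (b:ℂ) ^ 2 * w ≠ 0 := mul_ne_zero (pow_ne_zero _ hbC) hw0
  have hD2 : (4:ℂ) * (b:ℂ) ^ 3 * (Real.pi:ℂ) ^ 2 * (k:ℂ) ^ 2 ≠ 0 := by
    simp [hbC, hπC, hkC]
  have hD3 : (4:ℂ) * (b:ℂ) ^ 2 * (Real.pi:ℂ) ^ 2 * (k:ℂ) ^ 2 * w ≠ 0 := by
    simp [hbC, hπC, hkC, hw0]
  set A : ℂ := ((a * b + c : ℝ) : ℂ) with hAdef
  have hA' : (shat - (a : ℂ)) / ((b : ℂ) * shat + (c : ℂ))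
      = ((b:ℂ) * w - A * (τ:ℂ)) / ((b:ℂ) ^ 2 * w) := by
    rw [hden, hshat, hAdef]
    push_cast
    field_simp
    ring
  have happrox : 1 / (b : ℂ)
        + Complex.I * A * (τ : ℂ) / (2 * (b : ℂ) ^ 2 * (Real.pi : ℂ) * (k : ℂ))
        - (τ : ℂ) ^ 2 * A * ((b : ℂ) * ((L:ℝ) : ℂ) / (τ : ℂ) + (c : ℂ))
            / (4 * (b : ℂ) ^ 3 * (Real.pi : ℂ) ^ 2 * (k : ℂ) ^ 2)
      = (4 * (b:ℂ) ^ 2 * (Real.pi:ℂ) ^ 2 * (k:ℂ) ^ 2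
          + 2 * (b:ℂ) * (Real.pi:ℂ) * (k:ℂ) * Complex.I * A * (τ:ℂ)
          - (τ:ℂ) * A * (b:ℂ) * ((α:ℝ):ℂ))
        / (4 * (b:ℂ) ^ 3 * (Real.pi:ℂ) ^ 2 * (k:ℂ) ^ 2) := by
    have h2b : (2:ℂ) * (b:ℂ) ^ 2 * (Real.pi:ℂ) * (k:ℂ) ≠ 0 := by
      simp [hbC, hπC, hkC]
    have t1 : 1 / (b:ℂ)
        = (4 * (b:ℂ) ^ 2 * (Real.pi:ℂ) ^ 2 * (k:ℂ) ^ 2)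
          / (4 * (b:ℂ) ^ 3 * (Real.pi:ℂ) ^ 2 * (k:ℂ) ^ 2) := by
      rw [div_eq_div_iff hbC hD2]; ring
    have t2 : Complex.I * A * (τ : ℂ) / (2 * (b : ℂ) ^ 2 * (Real.pi : ℂ) * (k : ℂ))
        = (2 * (b:ℂ) * (Real.pi:ℂ) * (k:ℂ) * Complex.I * A * (τ:ℂ))
          / (4 * (b:ℂ) ^ 3 * (Real.pi:ℂ) ^ 2 * (k:ℂ) ^ 2) := by
      rw [div_eq_div_iff h2b hD2]; ring
    have t3 : (τ : ℂ) ^ 2 * A * ((b : ℂ) * ((L:ℝ) : ℂ) / (τ : ℂ) + (c : ℂ))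
          / (4 * (b : ℂ) ^ 3 * (Real.pi : ℂ) ^ 2 * (k : ℂ) ^ 2)
        = ((τ:ℂ) * A * (b:ℂ) * ((α:ℝ):ℂ))
          / (4 * (b:ℂ) ^ 3 * (Real.pi:ℂ) ^ 2 * (k:ℂ) ^ 2) := by
      congr 1
      calc (τ : ℂ) ^ 2 * A * ((b : ℂ) * ((L:ℝ) : ℂ) / (τ : ℂ) + (c : ℂ))
          = (τ:ℂ) * A * (((b : ℂ) * ((L:ℝ) : ℂ) / (τ : ℂ) + (c : ℂ)) * (τ:ℂ)) := by ring
        _ = (τ:ℂ) * A * ((b:ℂ) * ((α:ℝ):ℂ)) := by rw [hLα]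
        _ = (τ:ℂ) * A * (b:ℂ) * ((α:ℝ):ℂ) := by ring
    rw [t1, t2, t3, ← add_div, ← sub_div]
  have key : (shat - (a : ℂ)) / ((b : ℂ) * shat + (c : ℂ))
          - (1 / (b : ℂ)
              + Complex.I * A * (τ : ℂ) / (2 * (b : ℂ) ^ 2 * (Real.pi : ℂ) * (k : ℂ))
              - (τ : ℂ) ^ 2 * A * ((b : ℂ) * ((L:ℝ) : ℂ) / (τ : ℂ) + (c : ℂ))
                  / (4 * (b : ℂ) ^ 3 * (Real.pi : ℂ) ^ 2 * (k : ℂ) ^ 2))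
      = A * (τ : ℂ) * ((α : ℝ) : ℂ) ^ 2
          / (4 * (b : ℂ) ^ 2 * (Real.pi : ℂ) ^ 2 * (k : ℂ) ^ 2 * w) := by
    rw [hA', happrox, div_sub_div _ _ hD1 hD2, div_eq_div_iff (mul_ne_zero hD1 hD2) hD3]
    linear_combination (-(A * (b:ℂ) ^ 3 * (τ:ℂ))
      * (4 * (b:ℂ) ^ 2 * (Real.pi:ℂ) ^ 2 * (k:ℂ) ^ 2 * w)) * hNum
  rw [key]
  have hnormw : 2 * (k : ℝ) * Real.pi ≤ ‖w‖ := by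
    calc 2 * (k : ℝ) * Real.pi = |w.im| := by
          rw [hwim, abs_of_pos]; positivity
      _ ≤ ‖w‖ := Complex.abs_im_le_norm w
  have hnum : ‖A * (τ : ℂ) * ((α : ℝ) : ℂ) ^ 2‖
      = |a * b + c| * τ * α ^ 2 := by
    have e : A * (τ : ℂ) * ((α : ℝ) : ℂ) ^ 2
        = (((a * b + c) * τ * α ^ 2 : ℝ) : ℂ) := by rw [hAdef]; push_cast; ring
    rw [e, Complex.norm_real, Real.norm_eq_abs, abs_mul, abs_mul, abs_of_pos hτ, abs_pow, sq_abs]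
  have hwpos : (0:ℝ) < ‖w‖ := norm_pos_iff.mpr hw0
  have hdn : ‖(4 : ℂ) * (b : ℂ) ^ 2 * (Real.pi : ℂ) ^ 2 * (k : ℂ) ^ 2 * w‖
      = 4 * b ^ 2 * Real.pi ^ 2 * (k : ℝ) ^ 2 * ‖w‖ := by
    have e : (4 : ℂ) * (b : ℂ) ^ 2 * (Real.pi : ℂ) ^ 2 * (k : ℂ) ^ 2
        = ((4 * b ^ 2 * Real.pi ^ 2 * (k : ℝ) ^ 2 : ℝ) : ℂ) := by push_cast; ring
    rw [norm_mul, e, Complex.norm_real, Real.norm_eq_abs, abs_of_pos (by positivity)]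
  rw [norm_div, hnum, hdn]
  have h1 : |a * b + c| * τ * α ^ 2 / (4 * b ^ 2 * Real.pi ^ 2 * (k : ℝ) ^ 2 * ‖w‖)
      ≤ |a * b + c| * τ * α ^ 2 / (4 * b ^ 2 * Real.pi ^ 2 * (k : ℝ) ^ 2 * (2 * (k : ℝ) * Real.pi)) := by
    gcongr
  have h2 : |a * b + c| * τ * α ^ 2 / (4 * b ^ 2 * Real.pi ^ 2 * (k : ℝ) ^ 2 * (2 * (k : ℝ) * Real.pi))
      = (|a * b + c| * τ * α ^ 2 / (8 * b ^ 2 * Real.pi ^ 3)) / (k : ℝ) ^ 3 := by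
    rw [div_div]
    congr 1
    all_goals ring
  have h3 : (|a * b + c| * τ * α ^ 2 / (8 * b ^ 2 * Real.pi ^ 3)) / (k : ℝ) ^ 3
      ≤ (|a * b + c| * τ * α ^ 2 / (8 * b ^ 2 * Real.pi ^ 3) + 1) / (k : ℝ) ^ 3 := by
    gcongr
    linarith
  calc _ ≤ _ := h1
    _ = _ := h2
    _ ≤ _ := h3
end

section
/- Let a, b, c ∈ ℝ, τ > 0, and let y : ℝ → ℝ be continuously differentiable on [−τ, ∞) and satisfy y′(t) = a·y(t) + b·y′(t−τ) + c·y(t−τ) for all t > 0. Suppose there exist M > 0 and σ > 0 with |y(t)| ≤ M·e^{σ·t} and |y′(t)| ≤ M·e^{σ·t} for all t ≥ −τ. Then for every s ∈ ℂ with Re(s) > σ, the integrals below converge and (s − a − (b·s + c)·e^{−s·τ})·∫_0^∞ y(t)·e^{−s·t} dt = y(0) − b·y(−τ) + (b·s + c)·e^{−s·τ}·∫_{−τ}^0 y(v)·e^{−s·v} dv. -/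
open MeasureTheory Set Filter


/-- Derivative of the solution, taken within `[−τ, ∞)`. -/
noncomputable def yd (τ : ℝ) (y : ℝ → ℝ) : ℝ → ℝ := derivWithin y (Set.Ici (-τ))

/-- if `y` is continuously differentiable on `[−τ, ∞)`, satisfies the
neutral delay differential equation `y′(t) = a·y(t) + b·y′(t−τ) + c·y(t−τ)` for `t > 0`,
and `y`, `y′` grow at most like `M·e^{σt}`, then for every `s` with `Re(s) > σ` the
Laplace integral converges and
`(s − a − (bs + c)e^{−sτ})·∫_0^∞ y(t)e^{−st} dt
  = y(0) − b·y(−τ) + (bs + c)e^{−sτ}·∫_{−τ}^0 y(v)e^{−sv} dv`. -/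
theorem stmt_10 (a b c τ : ℝ) (hτ : 0 < τ) (y : ℝ → ℝ)
    (hy : ContDiffOn ℝ 1 y (Set.Ici (-τ)))
    (hode : ∀ t : ℝ, 0 < t →
      yd τ y t = a * y t + b * yd τ y (t - τ) + c * y (t - τ))
    (M σ : ℝ) (hM : 0 < M) (hσ : 0 < σ)
    (hgrow : ∀ t : ℝ, -τ ≤ t → |y t| ≤ M * Real.exp (σ * t))
    (hgrow' : ∀ t : ℝ, -τ ≤ t → |yd τ y t| ≤ M * Real.exp (σ * t))
    (s : ℂ) (hs : σ < s.re) :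
    MeasureTheory.IntegrableOn (fun t : ℝ => (y t : ℂ) * Complex.exp (-s * (t : ℂ)))
        (Set.Ioi (0 : ℝ)) ∧
    (s - (a : ℂ) - ((b : ℂ) * s + (c : ℂ)) * Complex.exp (-s * (τ : ℂ)))
        * ∫ t in Set.Ioi (0 : ℝ), (y t : ℂ) * Complex.exp (-s * (t : ℂ))
      = ((y 0 - b * y (-τ) : ℝ) : ℂ)
        + ((b : ℂ) * s + (c : ℂ)) * Complex.exp (-s * (τ : ℂ))
            * ∫ v in (-τ : ℝ)..0, (y v : ℂ) * Complex.exp (-s * (v : ℂ)) := by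
  have hτ0 : (-τ : ℝ) < 0 := neg_lt_zero.mpr hτ
  have hr : 0 < s.re - σ := sub_pos.mpr hs
  -- norm of exponential
  have hnorm : ∀ t : ℝ, ‖Complex.exp (-s * t)‖ = Real.exp (-s.re * t) := by
    intro t
    rw [Complex.norm_exp]
    congr 1
    simp [Complex.mul_re]
  -- continuity
  have hycont : ContinuousOn y (Ici (-τ)) := hy.continuousOn
  have hydcont : ContinuousOn (yd τ y) (Ici (-τ)) :=
    hy.continuousOn_derivWithin (uniqueDiffOn_Ici _) le_rfl
  -- derivative
  have hderiv : ∀ t : ℝ, -τ < t → HasDerivAt y (yd τ y t) t := by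
    intro t ht
    have hnhds : Ici (-τ) ∈ nhds t := Ici_mem_nhds ht
    have hd := (hy.differentiableOn one_ne_zero) t (le_of_lt ht)
    have hd' : DifferentiableAt ℝ y t := hd.differentiableAt hnhds
    have heq : yd τ y t = deriv y t := derivWithin_of_mem_nhds hnhds
    rw [heq]
    exact hd'.hasDerivAt
  -- derivative of exponential
  have hexp : ∀ x : ℝ, HasDerivAt (fun t : ℝ => Complex.exp (-s * t))
      (-s * Complex.exp (-s * x)) x := by
    intro x
    have h1 : HasDerivAt (fun z : ℂ => Complex.exp (-s * z)) (-s * Complex.exp (-s * x)) (x : ℂ) := by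
      simpa [Function.comp_def, mul_comm] using
        ((Complex.hasDerivAt_exp (-s * x)).comp (x : ℂ) ((hasDerivAt_id (x : ℂ)).const_mul (-s)))
    simpa using h1.comp_ofReal
  -- continuity of exponential
  have hexpc : Continuous (fun t : ℝ => Complex.exp (-s * t)) :=
    Complex.continuous_exp.comp (continuous_const.mul Complex.continuous_ofReal)
  -- generic integrability with shift
  have key_int : ∀ g : ℝ → ℝ, ContinuousOn g (Ici (-τ)) →
      (∀ t, -τ ≤ t → |g t| ≤ M * Real.exp (σ * t)) → ∀ δ : ℝ, 0 ≤ δ → ∀ x₀ : ℝ, δ - τ ≤ x₀ →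
      IntegrableOn (fun t : ℝ => (g (t - δ) : ℂ) * Complex.exp (-s * t)) (Ioi x₀) := by
    intro g hg hgb δ hδ x₀ hx₀
    have hsub : ∀ t ∈ Ioi x₀, -τ ≤ t - δ := by
      intro t ht
      simp only [mem_Ioi] at ht
      linarith
    have hmeas : AEStronglyMeasurable (fun t : ℝ => (g (t - δ) : ℂ) * Complex.exp (-s * t))
        (volume.restrict (Ioi x₀)) := by
      apply ContinuousOn.aestronglyMeasurable ?_ measurableSet_Ioi
      apply ContinuousOn.mul ?_ hexpc.continuousOn
      exact Complex.continuous_ofReal.comp_continuousOn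
        (hg.comp (continuous_id.sub continuous_const).continuousOn hsub)
    apply Integrable.mono' (((exp_neg_integrableOn_Ioi x₀ hr).const_mul M)) hmeas
    filter_upwards [ae_restrict_mem measurableSet_Ioi] with t ht
    rw [norm_mul, hnorm, Complex.norm_real]
    have h1 : |g (t - δ)| ≤ M * Real.exp (σ * (t - δ)) := hgb _ (hsub t ht)
    have h2 : Real.exp (σ * (t - δ)) ≤ Real.exp (σ * t) := by
      apply Real.exp_le_exp.mpr
      nlinarith
    calc ‖g (t - δ)‖ * Real.exp (-s.re * t)
        ≤ (M * Real.exp (σ * t)) * Real.exp (-s.re * t) := by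
          apply mul_le_mul_of_nonneg_right _ (Real.exp_nonneg _)
          calc |g (t - δ)| ≤ M * Real.exp (σ * (t - δ)) := h1
            _ ≤ M * Real.exp (σ * t) := by nlinarith [Real.exp_nonneg (σ * (t-δ))]
      _ = M * Real.exp (-(s.re - σ) * t) := by
          rw [mul_assoc, ← Real.exp_add]; ring_nf
  -- integrability facts
  have hIy : IntegrableOn (fun t : ℝ => (y t : ℂ) * Complex.exp (-s * t)) (Ioi 0) := by
    simpa using key_int y hycont hgrow 0 le_rfl 0 (by linarith)
  have hIyd : IntegrableOn (fun t : ℝ => (yd τ y t : ℂ) * Complex.exp (-s * t)) (Ioi 0) := by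
    simpa using key_int (yd τ y) hydcont hgrow' 0 le_rfl 0 (by linarith)
  have hIyτ : IntegrableOn (fun t : ℝ => (y (t - τ) : ℂ) * Complex.exp (-s * t)) (Ioi 0) :=
    key_int y hycont hgrow τ hτ.le 0 (by linarith)
  have hIydτ : IntegrableOn (fun t : ℝ => (yd τ y (t - τ) : ℂ) * Complex.exp (-s * t)) (Ioi 0) :=
    key_int (yd τ y) hydcont hgrow' τ hτ.le 0 (by linarith)
  refine ⟨hIy, ?_⟩
  -- tendsto 0 at top
  have htend : Tendsto (fun t : ℝ => (y t : ℂ) * Complex.exp (-s * t)) atTop (nhds 0) := by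
    have hb : Tendsto (fun t : ℝ => M * Real.exp (-(s.re - σ) * t)) atTop (nhds 0) := by
      rw [show (0:ℝ) = M * 0 by ring]
      apply Tendsto.const_mul
      apply Real.tendsto_exp_atBot.comp
      exact Tendsto.const_mul_atTop_of_neg (by linarith : -(s.re - σ) < 0) tendsto_id
    apply squeeze_zero_norm' ?_ hb
    filter_upwards [eventually_ge_atTop (0:ℝ)] with t ht
    rw [norm_mul, hnorm, Complex.norm_real]
    have h1 : |y t| ≤ M * Real.exp (σ * t) := hgrow t (by linarith)
    calc ‖y t‖ * Real.exp (-s.re * t) ≤ (M * Real.exp (σ * t)) * Real.exp (-s.re * t) := by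
          apply mul_le_mul_of_nonneg_right h1 (Real.exp_nonneg _)
      _ = M * Real.exp (-(s.re - σ) * t) := by rw [mul_assoc, ← Real.exp_add]; ring_nf
  -- abbreviations
  set K : ℂ := Complex.exp (-s * (τ : ℂ)) with hK
  set Y : ℂ := ∫ t in Ioi (0:ℝ), (y t : ℂ) * Complex.exp (-s * t) with hY
  set D : ℂ := ∫ t in Ioi (0:ℝ), (yd τ y t : ℂ) * Complex.exp (-s * t) with hD
  set Yτ : ℂ := ∫ t in Ioi (0:ℝ), (y (t - τ) : ℂ) * Complex.exp (-s * t) with hYτ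
  set Dτ : ℂ := ∫ t in Ioi (0:ℝ), (yd τ y (t - τ) : ℂ) * Complex.exp (-s * t) with hDτ
  set I : ℂ := ∫ v in (-τ : ℝ)..0, (y v : ℂ) * Complex.exp (-s * (v : ℂ)) with hI
  set J : ℂ := ∫ v in (-τ : ℝ)..0, (yd τ y v : ℂ) * Complex.exp (-s * (v : ℂ)) with hJ
  -- equation (1): D = s * Y - y 0  (improper integration by parts)
  have h1 : D = s * Y - (y 0 : ℂ) := by
    have hfd : ∀ x ∈ Ici (0:ℝ), HasDerivAt (fun t : ℝ => (y t : ℂ) * Complex.exp (-s * t))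
        ((yd τ y x : ℂ) * Complex.exp (-s * x) + (y x : ℂ) * (-s * Complex.exp (-s * x))) x := by
      intro x hx
      exact ((hderiv x (lt_of_lt_of_le hτ0 hx)).ofReal_comp).mul (hexp x)
    have hint : IntegrableOn (fun x : ℝ => (yd τ y x : ℂ) * Complex.exp (-s * x)
        + (y x : ℂ) * (-s * Complex.exp (-s * x))) (Ioi 0) := by
      apply hIyd.add
      have : (fun x : ℝ => (y x : ℂ) * (-s * Complex.exp (-s * x)))
          = fun x : ℝ => -s * ((y x : ℂ) * Complex.exp (-s * x)) := by funext x; ring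
      rw [this]
      exact hIy.const_mul (-s)
    have hibp := integral_Ioi_of_hasDerivAt_of_tendsto' hfd hint htend
    have hsplit : ∫ x in Ioi (0:ℝ), ((yd τ y x : ℂ) * Complex.exp (-s * x)
        + (y x : ℂ) * (-s * Complex.exp (-s * x)))
        = D + (-s) * Y := by
      rw [integral_add hIyd]
      · congr 1
        have : (fun x : ℝ => (y x : ℂ) * (-s * Complex.exp (-s * x)))
            = fun x : ℝ => -s * ((y x : ℂ) * Complex.exp (-s * x)) := by funext x; ring
        rw [this, integral_const_mul]
      · have : (fun x : ℝ => (y x : ℂ) * (-s * Complex.exp (-s * x)))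
            = fun x : ℝ => -s * ((y x : ℂ) * Complex.exp (-s * x)) := by funext x; ring
        rw [this]
        exact hIy.const_mul (-s)
    rw [hsplit] at hibp
    have h0 : Complex.exp (-s * ((0:ℝ) : ℂ)) = 1 := by norm_num
    rw [h0] at hibp
    have : D + (-s) * Y = 0 - (y 0 : ℂ) * 1 := hibp
    linear_combination this
  -- generic shift lemma
  have hshift : ∀ g : ℝ → ℂ, ∫ t in Ioi (0:ℝ), g (t - τ) = ∫ u in Ioi (-τ), g u := by
    intro g
    have h := (measurePreserving_sub_right volume τ).setIntegral_preimage_emb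
      (MeasurableEquiv.subRight τ).measurableEmbedding g (Ioi (-τ))
    have hpre : (· - τ) ⁻¹' Ioi (-τ) = Ioi (0:ℝ) := by
      ext x
      simp only [mem_preimage, mem_Ioi]
      constructor <;> intro <;> linarith
    rw [← h, hpre]
  -- splitting lemma
  have hIoc : ∀ g : ℝ → ℂ, IntegrableOn g (Ioi (-τ)) →
      ∫ u in Ioi (-τ), g u = (∫ u in Ioc (-τ) 0, g u) + ∫ u in Ioi (0:ℝ), g u := by
    intro g hg
    rw [← setIntegral_union (Ioc_disjoint_Ioi le_rfl) measurableSet_Ioi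
      (hg.mono_set (Ioc_subset_Ioi_self.trans (Ioi_subset_Ioi (by linarith))))
      (hg.mono_set (Ioi_subset_Ioi (by linarith))), Ioc_union_Ioi_eq_Ioi hτ0.le]
  -- equation (2): Yτ = K * (I + Y)
  have hshift_mul : ∀ g : ℝ → ℝ, ContinuousOn g (Ici (-τ)) →
      (∀ t, -τ ≤ t → |g t| ≤ M * Real.exp (σ * t)) →
      (∫ t in Ioi (0:ℝ), (g (t - τ) : ℂ) * Complex.exp (-s * t))
        = K * ((∫ u in Ioc (-τ) (0:ℝ), (g u : ℂ) * Complex.exp (-s * u))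
            + ∫ u in Ioi (0:ℝ), (g u : ℂ) * Complex.exp (-s * u)) := by
    intro g hg hgb
    have hfun : (fun t : ℝ => (g (t - τ) : ℂ) * Complex.exp (-s * t))
        = fun t : ℝ => (fun u : ℝ => K * ((g u : ℂ) * Complex.exp (-s * u))) (t - τ) := by
      funext t
      simp only [hK]
      rw [mul_comm K, mul_assoc, ← Complex.exp_add]
      congr 2
      push_cast
      ring
    have hIg : IntegrableOn (fun u : ℝ => (g u : ℂ) * Complex.exp (-s * u)) (Ioi (-τ)) := by
      simpa using key_int g hg hgb 0 le_rfl (-τ) (by linarith)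
    calc ∫ t in Ioi (0:ℝ), (g (t - τ) : ℂ) * Complex.exp (-s * t)
        = ∫ t in Ioi (0:ℝ), (fun u : ℝ => K * ((g u : ℂ) * Complex.exp (-s * u))) (t - τ) := by
          rw [hfun]
      _ = ∫ u in Ioi (-τ), K * ((g u : ℂ) * Complex.exp (-s * u)) :=
          hshift (fun u : ℝ => K * ((g u : ℂ) * Complex.exp (-s * u)))
      _ = K * ∫ u in Ioi (-τ), (g u : ℂ) * Complex.exp (-s * u) := integral_const_mul _ _
      _ = K * ((∫ u in Ioc (-τ) (0:ℝ), (g u : ℂ) * Complex.exp (-s * u))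
            + ∫ u in Ioi (0:ℝ), (g u : ℂ) * Complex.exp (-s * u)) := by
          rw [hIoc _ hIg]
  have h2 : Yτ = K * (I + Y) := by
    rw [hYτ, hI, intervalIntegral.integral_of_le (by linarith : (-τ:ℝ) ≤ 0)]
    exact hshift_mul y hycont hgrow
  have h3 : Dτ = K * (J + D) := by
    rw [hDτ, hJ, intervalIntegral.integral_of_le (by linarith : (-τ:ℝ) ≤ 0)]
    exact hshift_mul (yd τ y) hydcont hgrow'
  -- equation (4): finite integration by parts
  set E' : ℂ := Complex.exp (s * (τ : ℂ)) with hE'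
  have h4 : J + (-s) * I = (y 0 : ℂ) - (y (-τ) : ℂ) * E' := by
    have hcont : ContinuousOn (fun v : ℝ => (y v : ℂ) * Complex.exp (-s * v)) (Icc (-τ) 0) :=
      (Complex.continuous_ofReal.comp_continuousOn
        (hycont.mono Icc_subset_Ici_self)).mul hexpc.continuousOn
    have hfd' : ∀ x ∈ Ioo (-τ:ℝ) 0, HasDerivAt (fun v : ℝ => (y v : ℂ) * Complex.exp (-s * v))
        ((yd τ y x : ℂ) * Complex.exp (-s * x) + (y x : ℂ) * (-s * Complex.exp (-s * x))) x := by
      intro x hx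
      exact ((hderiv x hx.1).ofReal_comp).mul (hexp x)
    have hcd : ContinuousOn (fun x : ℝ => (yd τ y x : ℂ) * Complex.exp (-s * x)
        + (y x : ℂ) * (-s * Complex.exp (-s * x))) (Icc (-τ) 0) := by
      apply ContinuousOn.add
      · exact (Complex.continuous_ofReal.comp_continuousOn
          (hydcont.mono Icc_subset_Ici_self)).mul hexpc.continuousOn
      · exact (Complex.continuous_ofReal.comp_continuousOn
          (hycont.mono Icc_subset_Ici_self)).mul
          ((continuous_const.mul hexpc).continuousOn)
    have hii : IntervalIntegrable (fun x : ℝ => (yd τ y x : ℂ) * Complex.exp (-s * x)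
        + (y x : ℂ) * (-s * Complex.exp (-s * x))) volume (-τ) 0 := by
      apply ContinuousOn.intervalIntegrable
      rwa [uIcc_of_le (by linarith : (-τ:ℝ) ≤ 0)]
    have hii1 : IntervalIntegrable (fun x : ℝ => (yd τ y x : ℂ) * Complex.exp (-s * x))
        volume (-τ) 0 := by
      apply ContinuousOn.intervalIntegrable
      rw [uIcc_of_le (by linarith : (-τ:ℝ) ≤ 0)]
      exact (Complex.continuous_ofReal.comp_continuousOn
        (hydcont.mono Icc_subset_Ici_self)).mul hexpc.continuousOn
    have hii2 : IntervalIntegrable (fun x : ℝ => (y x : ℂ) * (-s * Complex.exp (-s * x)))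
        volume (-τ) 0 := by
      apply ContinuousOn.intervalIntegrable
      rw [uIcc_of_le (by linarith : (-τ:ℝ) ≤ 0)]
      exact (Complex.continuous_ofReal.comp_continuousOn
        (hycont.mono Icc_subset_Ici_self)).mul ((continuous_const.mul hexpc).continuousOn)
    have hibp2 := intervalIntegral.integral_eq_sub_of_hasDerivAt_of_le
      (by linarith : (-τ:ℝ) ≤ 0) hcont hfd' hii
    rw [intervalIntegral.integral_add hii1 hii2] at hibp2
    have e1 : (∫ x in (-τ:ℝ)..0, (y x : ℂ) * (-s * Complex.exp (-s * x))) = (-s) * I := by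
      rw [hI]
      have : (fun x : ℝ => (y x : ℂ) * (-s * Complex.exp (-s * x)))
          = fun x : ℝ => (-s) * ((y x : ℂ) * Complex.exp (-s * x)) := by funext x; ring
      rw [this, intervalIntegral.integral_const_mul]
    rw [e1] at hibp2
    rw [hJ]
    rw [hibp2]
    have e2 : Complex.exp (-s * ((0:ℝ):ℂ)) = 1 := by norm_num
    have e3 : Complex.exp (-s * ((-τ:ℝ):ℂ)) = E' := by
      rw [hE']
      congr 1
      push_cast
      ring
    rw [e2, e3]
    ring
  -- h6 : K * E' = 1
  have h6 : K * E' = 1 := by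
    rw [hK, hE', ← Complex.exp_add]
    simp
  -- equation (5): the ODE
  have h5 : D = (a : ℂ) * Y + (b : ℂ) * Dτ + (c : ℂ) * Yτ := by
    have iA : Integrable (fun t : ℝ => (a:ℂ) * ((y t : ℂ) * Complex.exp (-s * t)))
        (volume.restrict (Ioi 0)) := hIy.const_mul _
    have iB : Integrable (fun t : ℝ => (b:ℂ) * ((yd τ y (t - τ) : ℂ) * Complex.exp (-s * t)))
        (volume.restrict (Ioi 0)) := hIydτ.const_mul _
    have iC : Integrable (fun t : ℝ => (c:ℂ) * ((y (t - τ) : ℂ) * Complex.exp (-s * t)))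
        (volume.restrict (Ioi 0)) := hIyτ.const_mul _
    have iBC : Integrable (fun t : ℝ => (b:ℂ) * ((yd τ y (t - τ) : ℂ) * Complex.exp (-s * t))
        + (c:ℂ) * ((y (t - τ) : ℂ) * Complex.exp (-s * t))) (volume.restrict (Ioi 0)) := iB.add iC
    rw [hY, hDτ, hYτ, ← integral_const_mul, ← integral_const_mul, ← integral_const_mul,
      add_assoc, ← integral_add iB iC, ← integral_add iA iBC, hD]
    apply setIntegral_congr_fun measurableSet_Ioi
    intro t ht
    simp only
    rw [hode t ht]
    push_cast
    ring
  -- final algebra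
  push_cast
  linear_combination ((b:ℂ) * K - 1) * h1 + h5 + (b:ℂ) * h3 + (c:ℂ) * h2
    + (b:ℂ) * K * h4 - (b:ℂ) * ((y (-τ) : ℝ) : ℂ) * h6
end
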